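/- The cubic polynomial 4λ³ − 2368λ² − 188λ + 1 has three real roots λ₁, λ₂, λ₃ satisfying 0 < λ₁ < 0.006, −0.085 < λ₂ < −0.084, and 592 < λ₃ < 593; in particular |λ₁| < |λ₂| < |λ₃|. -/
import Mathlib

private noncomputable def fpoly : ℝ → ℝ := fun x => 4*x^3 - 2368*x^2 - 188*x + 1

private lemma fcont : Continuous fpoly := by
  unfold fpoly; continuity

private lemma root_between {a b : ℝ} (hab : a ≤ b) (ha : 0 < fpoly a) (hb : fpoly b < 0) :
    ∃ x, fpoly x = 0 ∧ a < x ∧ x < b := by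
  have h := intermediate_value_Ioo' hab fcont.continuousOn
  have : (0:ℝ) ∈ Set.Ioo (fpoly b) (fpoly a) := ⟨hb, ha⟩
  obtain ⟨x, hx, hfx⟩ := h this
  exact ⟨x, hfx, hx.1, hx.2⟩

private lemma root_between' {a b : ℝ} (hab : a ≤ b) (ha : fpoly a < 0) (hb : 0 < fpoly b) :
    ∃ x, fpoly x = 0 ∧ a < x ∧ x < b := by
  have h := intermediate_value_Ioo hab fcont.continuousOn
  obtain ⟨x, hx, hfx⟩ := h ⟨ha, hb⟩
  exact ⟨x, hfx, hx.1, hx.2⟩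

theorem char_poly_roots :
    ∃ l1 l2 l3 : ℝ,
      (4*l1^3 - 2368*l1^2 - 188*l1 + 1 = 0) ∧
      (4*l2^3 - 2368*l2^2 - 188*l2 + 1 = 0) ∧
      (4*l3^3 - 2368*l3^2 - 188*l3 + 1 = 0) ∧
      (0 < l1 ∧ l1 < 0.006) ∧
      (-0.085 < l2 ∧ l2 < -0.084) ∧
      (592 < l3 ∧ l3 < 593) ∧
      |l1| < |l2| ∧ |l2| < |l3| := by
  obtain ⟨l1, h1, hl1a, hl1b⟩ : ∃ x, fpoly x = 0 ∧ (0:ℝ) < x ∧ x < 0.006 := by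
    apply root_between (by norm_num) <;> · unfold fpoly; norm_num
  obtain ⟨l2, h2, hl2a, hl2b⟩ : ∃ x, fpoly x = 0 ∧ (-0.085:ℝ) < x ∧ x < -0.084 := by
    apply root_between' (by norm_num) <;> · unfold fpoly; norm_num
  obtain ⟨l3, h3, hl3a, hl3b⟩ : ∃ x, fpoly x = 0 ∧ (592:ℝ) < x ∧ x < 593 := by
    apply root_between' (by norm_num) <;> · unfold fpoly; norm_num
  refine ⟨l1, l2, l3, h1, h2, h3, ⟨hl1a, hl1b⟩, ⟨hl2a, hl2b⟩, ⟨hl3a, hl3b⟩, ?_, ?_⟩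
  · rw [abs_of_pos hl1a, abs_of_neg (by linarith)]
    linarith
  · rw [abs_of_neg (by linarith : l2 < 0), abs_of_pos (by linarith : (0:ℝ) < l3)]
    linarith
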